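/- The set of real numbers of the form 2π·log((m+1)·F_n + F_{n-1})/(m+n), where m ranges over positive even integers and n over integers ≥ 4 with n ≡ 0 or 1 (mod 3), is dense in the interval [0, 2π·log(φ)]. -/

import Mathlib

set_option maxHeartbeats 1000000


open Real Filter

private lemma fib_gold_bounds : ∀ n : ℕ,
    (Nat.fib (n+1) : ℝ) ≤ goldenRatio ^ n ∧ goldenRatio ^ n ≤ (Nat.fib (n+2) : ℝ) := by
  intro n
  induction n using Nat.twoStepInduction with
  | zero => norm_num
  | one =>
    constructor
    · norm_num [one_lt_goldenRatio.le]
    · norm_num [goldenRatio_lt_two.le, Nat.fib]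
  | more n ih1 ih2 =>
    have hpow : goldenRatio ^ (n+2) = goldenRatio ^ (n+1) + goldenRatio ^ n := by
      have := goldenRatio_pow_sub_goldenRatio_pow n; linarith
    have hfib : (Nat.fib (n+3) : ℝ) = Nat.fib (n+2) + Nat.fib (n+1) := by
      rw [show n+3 = (n+1)+2 by ring, Nat.fib_add_two]; push_cast; ring
    have hfib' : (Nat.fib (n+4) : ℝ) = Nat.fib (n+3) + Nat.fib (n+2) := by
      rw [show n+4 = (n+2)+2 by ring, Nat.fib_add_two]; push_cast; ring
    constructor
    · rw [hpow, hfib]; linarith [ih1.1, ih2.1]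
    · rw [hpow, hfib']; linarith [ih1.2, ih2.2]

private lemma lin_ratio_tendsto (a b c d : ℝ) (hc : 0 < c) :
    Tendsto (fun x : ℝ => (a*x+b)/(c*x+d)) atTop (nhds (a/c)) := by
  have h : Tendsto (fun x : ℝ => (a + b*x⁻¹)/(c + d*x⁻¹)) atTop (nhds (a/c)) := by
    have h1 : Tendsto (fun x : ℝ => a + b*x⁻¹) atTop (nhds (a + b*0)) :=
      tendsto_const_nhds.add (tendsto_const_nhds.mul tendsto_inv_atTop_zero)
    have h2 : Tendsto (fun x : ℝ => c + d*x⁻¹) atTop (nhds (c + d*0)) :=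
      tendsto_const_nhds.add (tendsto_const_nhds.mul tendsto_inv_atTop_zero)
    simp only [mul_zero, add_zero] at h1 h2
    exact h1.div h2 hc.ne'
  refine h.congr' ?_
  filter_upwards [eventually_gt_atTop 0] with x hx
  field_simp

theorem det_densities_dense :
    ∀ x ∈ Set.Icc (0 : ℝ) (2 * π * Real.log ((1 + Real.sqrt 5) / 2)),
      x ∈ closure {y : ℝ | ∃ m n : ℕ, 0 < m ∧ Even m ∧ 4 ≤ n ∧
        (n % 3 = 0 ∨ n % 3 = 1) ∧
        y = 2 * π * Real.log ((m + 1) * Nat.fib n + Nat.fib (n - 1)) / (m + n)} := by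
  set L : ℝ := Real.log ((1 + Real.sqrt 5) / 2) with hLdef
  have hgold : (1 + Real.sqrt 5) / 2 = goldenRatio := rfl
  have hL : 0 < L := by rw [hLdef, hgold]; exact Real.log_pos one_lt_goldenRatio
  have hπ : (0:ℝ) < π := Real.pi_pos
  set S := {y : ℝ | ∃ m n : ℕ, 0 < m ∧ Even m ∧ 4 ≤ n ∧
        (n % 3 = 0 ∨ n % 3 = 1) ∧
        y = 2 * π * Real.log ((m + 1) * Nat.fib n + Nat.fib (n - 1)) / (m + n)} with hS
  -- It suffices to show that every point of the open interval is in the closure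
  have key : ∀ x ∈ Set.Ioo (0:ℝ) (2 * π * L), x ∈ closure S := by
    intro x hx
    obtain ⟨hx0, hx1⟩ := hx
    set t : ℝ := x / (2 * π * L) with htdef
    have h2πL : 0 < 2 * π * L := by positivity
    have ht0 : 0 < t := div_pos hx0 h2πL
    have ht1 : t < 1 := (div_lt_one h2πL).mpr hx1
    have hxt : x = 2 * π * L * t := by rw [htdef]; field_simp
    set c : ℝ := 1/t - 1 with hcdef
    have hc0 : 0 < c := by
      rw [hcdef]; have : 1 < 1/t := one_lt_one_div ht0 ht1; linarith
    have hct : 1 + c = 1/t := by rw [hcdef]; ring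
    -- sequence
    set M : ℕ → ℕ := fun j => 2 * ⌈(3*(j:ℝ)+3) * c⌉₊ + 2 with hM
    set N : ℕ → ℝ := fun j => 6*(j:ℝ)+6 with hNdef
    have hNpos : ∀ j, (0:ℝ) < N j := by intro j; simp only [hNdef]; positivity
    have hN6 : ∀ j, (6:ℝ) ≤ N j := by
      intro j; simp only [hNdef]; have : (0:ℝ) ≤ (j:ℝ) := Nat.cast_nonneg j; linarith
    have hMlb : ∀ j, N j * c + 2 ≤ (M j : ℝ) := by
      intro j
      have h := Nat.le_ceil ((3*(j:ℝ)+3) * c)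
      simp only [hM, hNdef]; push_cast; nlinarith
    have hMub : ∀ j, (M j : ℝ) ≤ N j * c + 4 := by
      intro j
      have h := (Nat.ceil_lt_add_one (by positivity : (0:ℝ) ≤ (3*(j:ℝ)+3) * c)).le
      simp only [hM, hNdef]; push_cast; nlinarith
    have hMpos : ∀ j, (0:ℝ) < (M j : ℝ) := by
      intro j
      have := hMlb j
      have : (0:ℝ) ≤ N j * c := le_of_lt (mul_pos (hNpos j) hc0)
      nlinarith [hMlb j]
    -- the function
    set f : ℕ → ℝ := fun j =>
      2 * π * Real.log ((M j + 1) * Nat.fib (6*j+6) + Nat.fib ((6*j+6) - 1)) / (M j + (6*j+6 : ℕ)) with hf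
    have hmem : ∀ j, f j ∈ S := by
      intro j
      refine ⟨M j, 6*j+6, ?_, ?_, by omega, Or.inl (by omega), rfl⟩
      · simp [hM]
      · refine ⟨⌈(3*(j:ℝ)+3) * c⌉₊ + 1, ?_⟩
        simp only [hM]
        ring
    -- cast of n
    have hncast : ∀ j, ((6*j+6 : ℕ) : ℝ) = N j := by
      intro j; simp only [hNdef]; push_cast; ring
    -- bounds on B
    set B : ℕ → ℝ := fun j => ((M j : ℝ) + 1) * Nat.fib (6*j+6) + Nat.fib ((6*j+6) - 1) with hB
    have hsub : ∀ j, (6*j+6) - 1 = 6*j+5 := by intro j; omega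
    have hBlb : ∀ j, goldenRatio ^ (6*j+4) ≤ B j := by
      intro j
      have h1 : goldenRatio ^ (6*j+4) ≤ (Nat.fib (6*j+6) : ℝ) := by
        have := (fib_gold_bounds (6*j+4)).2
        rwa [show 6*j+4+2 = 6*j+6 by ring] at this
      have h2 : (1:ℝ) ≤ (M j : ℝ) + 1 := by linarith [hMpos j]
      have h3 : (0:ℝ) ≤ (Nat.fib ((6*j+6)-1) : ℝ) := Nat.cast_nonneg _
      have h4 : (0:ℝ) ≤ (Nat.fib (6*j+6) : ℝ) := Nat.cast_nonneg _
      simp only [hB]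
      nlinarith
    have hBub : ∀ j, B j ≤ ((M j : ℝ) + 2) * goldenRatio ^ (6*j+5) := by
      intro j
      have h1 : (Nat.fib (6*j+6) : ℝ) ≤ goldenRatio ^ (6*j+5) := by
        have := (fib_gold_bounds (6*j+5)).1
        rwa [show 6*j+5+1 = 6*j+6 by ring] at this
      have h2 : (Nat.fib ((6*j+6)-1) : ℝ) ≤ goldenRatio ^ (6*j+4) := by
        rw [hsub j]
        have := (fib_gold_bounds (6*j+4)).1
        rwa [show 6*j+4+1 = 6*j+5 by ring] at this
      have h3 : goldenRatio ^ (6*j+4) ≤ goldenRatio ^ (6*j+5) :=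
        pow_le_pow_right₀ one_lt_goldenRatio.le (by omega)
      have h4 : (0:ℝ) < (M j : ℝ) + 1 := by linarith [hMpos j]
      simp only [hB]
      nlinarith
    have hBpos : ∀ j, (0:ℝ) < B j := fun j => lt_of_lt_of_le (by positivity) (hBlb j)
    -- log bounds
    have hloglb : ∀ j, (N j - 2) * L ≤ Real.log (B j) := by
      intro j
      calc (N j - 2) * L = ((6*j+4 : ℕ) : ℝ) * L := by
            rw [hNdef]; push_cast; ring_nf
        _ = Real.log (goldenRatio ^ (6*j+4)) := by rw [Real.log_pow, hLdef, hgold]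
        _ ≤ Real.log (B j) := Real.log_le_log (by positivity) (hBlb j)
    have hlogub : ∀ j, Real.log (B j) ≤ N j * L + Real.log (N j) + Real.log (c+1) := by
      intro j
      have h1 : Real.log (B j) ≤ Real.log (((M j : ℝ) + 2) * goldenRatio ^ (6*j+5)) :=
        Real.log_le_log (hBpos j) (hBub j)
      have h2 : Real.log (((M j : ℝ) + 2) * goldenRatio ^ (6*j+5))
          = Real.log ((M j : ℝ) + 2) + ((6*j+5 : ℕ) : ℝ) * L := by
        rw [Real.log_mul (by positivity) (by positivity), Real.log_pow, hLdef, hgold]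
      have h3 : ((6*j+5 : ℕ) : ℝ) * L ≤ N j * L := by
        have : ((6*j+5 : ℕ) : ℝ) ≤ N j := by rw [hNdef]; push_cast; linarith
        nlinarith
      have h4 : Real.log ((M j : ℝ) + 2) ≤ Real.log (N j) + Real.log (c+1) := by
        rw [← Real.log_mul (hNpos j).ne' (by positivity)]
        refine Real.log_le_log (by positivity) ?_
        have := hMub j
        have h6 := hN6 j
        nlinarith
      linarith
    -- denominator bounds
    have hdenlb : ∀ j, N j / t ≤ (M j : ℝ) + N j := by
      intro j
      have := hMlb j
      have : N j * c + 2 + N j ≤ (M j : ℝ) + N j := by linarith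
      calc N j / t = N j * (1 + c) := by rw [hct]; field_simp
        _ ≤ (M j : ℝ) + N j := by nlinarith
    have hdenub : ∀ j, (M j : ℝ) + N j ≤ N j / t + 4 := by
      intro j
      have := hMub j
      calc (M j : ℝ) + N j ≤ N j * c + 4 + N j := by linarith
        _ = N j * (1 + c) + 4 := by ring
        _ = N j / t + 4 := by rw [hct]; field_simp
    have hdenpos : ∀ j, (0:ℝ) < (M j : ℝ) + N j := fun j => by linarith [hMpos j, hNpos j]
    -- squeeze: lower and upper sequences
    set lo : ℕ → ℝ := fun j => 2 * π * ((L * N j + (-2*L)) / ((1/t) * N j + 4)) with hlo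
    set hi : ℕ → ℝ := fun j => 2 * π * t * (L + Real.log (N j) / N j + Real.log (c+1) / N j) with hhi
    have hfval : ∀ j, f j = 2 * π * (Real.log (B j) / ((M j : ℝ) + N j)) := by
      intro j
      simp only [hf, hB, hncast]
      rw [mul_div_assoc]
    have hle1 : ∀ j, lo j ≤ f j := by
      intro j
      rw [hfval j, hlo]
      have hnum : (0:ℝ) ≤ L * N j + (-2*L) := by nlinarith [hN6 j]
      have h1 : (L * N j + (-2*L)) / ((1/t) * N j + 4) ≤ Real.log (B j) / ((M j : ℝ) + N j) := by
        apply div_le_div₀ (le_trans hnum (by linarith [hloglb j, hN6 j] : _))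
          (by linarith [hloglb j]) (hdenpos j)
        · have := hdenub j
          rw [div_eq_mul_inv, mul_comm] at this
          calc (M j : ℝ) + N j ≤ N j / t + 4 := hdenub j
            _ = (1/t) * N j + 4 := by ring
      nlinarith [h1]
    have hle2 : ∀ j, f j ≤ hi j := by
      intro j
      rw [hfval j, hhi]
      have hKnn : (0:ℝ) ≤ N j * L + Real.log (N j) + Real.log (c+1) := by
        have l1 : (0:ℝ) ≤ Real.log (N j) := Real.log_nonneg (by linarith [hN6 j])
        have l2 : (0:ℝ) ≤ Real.log (c+1) := Real.log_nonneg (by linarith)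
        nlinarith [hNpos j, hL.le]
      have hNt : (0:ℝ) < N j / t := div_pos (hNpos j) ht0
      have h1 : Real.log (B j) / ((M j : ℝ) + N j)
          ≤ (N j * L + Real.log (N j) + Real.log (c+1)) / (N j / t) :=
        div_le_div₀ hKnn (hlogub j) hNt (hdenlb j)
      have h2 : (N j * L + Real.log (N j) + Real.log (c+1)) / (N j / t)
          = t * (L + Real.log (N j) / N j + Real.log (c+1) / N j) := by
        have := (hNpos j).ne'
        field_simp
      rw [h2] at h1
      nlinarith [h1]
    -- limits
    have hNtend : Tendsto N atTop atTop := by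
      rw [hNdef]
      apply tendsto_atTop_add_const_right
      exact (tendsto_natCast_atTop_atTop (R := ℝ)).const_mul_atTop (by norm_num)
    have hlotend : Tendsto lo atTop (nhds x) := by
      have hg : Tendsto (fun y : ℝ => 2 * π * ((L * y + (-2*L)) / ((1/t) * y + 4)))
          atTop (nhds (2 * π * (L / (1/t)))) :=
        tendsto_const_nhds.mul (lin_ratio_tendsto L (-2*L) (1/t) 4 (by positivity))
      have : 2 * π * (L / (1/t)) = x := by rw [hxt]; field_simp
      rw [← this]
      exact hg.comp hNtend
    have hhitend : Tendsto hi atTop (nhds x) := by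
      have hlog : Tendsto (fun y : ℝ => Real.log y / y) atTop (nhds 0) :=
        Real.isLittleO_log_id_atTop.tendsto_div_nhds_zero
      have h1 : Tendsto (fun j => Real.log (N j) / N j) atTop (nhds 0) := hlog.comp hNtend
      have h2 : Tendsto (fun j => Real.log (c+1) / N j) atTop (nhds 0) :=
        tendsto_const_nhds.div_atTop hNtend
      have h3 : Tendsto hi atTop (nhds (2 * π * t * (L + 0 + 0))) :=
        tendsto_const_nhds.mul ((tendsto_const_nhds.add h1).add h2)
      have : 2 * π * t * (L + 0 + 0) = x := by rw [hxt]; ring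
      rwa [this] at h3
    have hftend : Tendsto f atTop (nhds x) :=
      tendsto_of_tendsto_of_tendsto_of_le_of_le hlotend hhitend hle1 hle2
    exact mem_closure_of_tendsto hftend (Eventually.of_forall hmem)
  intro x hx
  have hIcc : Set.Icc (0:ℝ) (2 * π * L) = closure (Set.Ioo (0:ℝ) (2 * π * L)) :=
    (closure_Ioo (by positivity : (0:ℝ) < 2 * π * L).ne).symm
  rw [hIcc] at hx
  have : closure (Set.Ioo (0:ℝ) (2 * π * L)) ⊆ closure (closure S) := closure_mono key
  rw [closure_closure] at this
  exact this hx
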